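/- Let w : [0,∞) → ℝ be bounded and piecewise constant on a sequence of nonempty contiguous intervals [s₀,s₁), [s₁,s₂), ... covering [0,∞), with dwell time δ₀ := inf_{k≥1}(s_k − s_{k−1}) > 0. Then for any T > 0 the family Σ₁ = { s ↦ w(r+s), s ∈ [0,T] : r ≥ 0 } is precompact in L¹(0,T; ℝ). -/

import Mathlib

open MeasureTheory Set

namespace Stmt3Aux

noncomputable abbrev μT (T : ℝ) : Measure ℝ := volume.restrict (Set.Ioc (0:ℝ) T)

lemma μT_fin (T : ℝ) (s : Set ℝ) : μT T s ≠ ⊤ := by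
  refine ne_top_of_le_ne_top ?_ (measure_mono (Set.subset_univ s))
  rw [Measure.restrict_apply_univ]
  exact measure_Ioc_lt_top.ne

noncomputable def ind (T t c : ℝ) : Lp ℝ 1 (μT T) :=
  indicatorConstLp (s := Set.Ioc t T) 1 measurableSet_Ioc (μT_fin T _) c

lemma ind_coe (T t c : ℝ) : ⇑(ind T t c) =ᵐ[μT T] (Set.Ioc t T).indicator fun _ => c :=
  indicatorConstLp_coeFn

lemma meas_le_abs (T a b : ℝ) : (μT T (Set.Ioc a b)).toReal ≤ max (b - a) 0 := by
  have h1 : μT T (Set.Ioc a b) ≤ ENNReal.ofReal (b - a) := by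
    have := Measure.restrict_le_self (μ := (volume : Measure ℝ)) (s := Set.Ioc (0:ℝ) T)
    calc μT T (Set.Ioc a b) ≤ volume (Set.Ioc a b) := this _
      _ = ENNReal.ofReal (b - a) := Real.volume_Ioc
  calc (μT T (Set.Ioc a b)).toReal ≤ (ENNReal.ofReal (b - a)).toReal :=
        ENNReal.toReal_mono ENNReal.ofReal_ne_top h1
    _ = max (b - a) 0 := ENNReal.toReal_ofReal'

lemma meas_le_T (T : ℝ) (s : Set ℝ) : (μT T s).toReal ≤ max T 0 := by
  have h1 : μT T s ≤ ENNReal.ofReal T := by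
    refine le_trans (measure_mono (Set.subset_univ s)) ?_
    rw [Measure.restrict_apply_univ]
    simp [Real.volume_Ioc]
  calc (μT T s).toReal ≤ (ENNReal.ofReal T).toReal :=
        ENNReal.toReal_mono ENNReal.ofReal_ne_top h1
    _ = max T 0 := ENNReal.toReal_ofReal'

lemma norm_ind (T t c : ℝ) : ‖ind T t c‖ = |c| * (μT T (Set.Ioc t T)).toReal := by
  rw [ind, norm_indicatorConstLp one_ne_zero ENNReal.one_ne_top]
  simp [Real.norm_eq_abs, measureReal_def]

lemma key1 (T t t' c : ℝ) : ‖ind T t c - ind T t' c‖ ≤ |c| * |t - t'| := by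
  have hcoe : ⇑(ind T t c - ind T t' c) =ᵐ[μT T]
      fun x => (Set.Ioc t T).indicator (fun _ => c) x
        - (Set.Ioc t' T).indicator (fun _ => c) x := by
    filter_upwards [Lp.coeFn_sub (ind T t c) (ind T t' c), ind_coe T t c, ind_coe T t' c]
      with x h1 h2 h3
    rw [h1, Pi.sub_apply, h2, h3]
  have hb : ∀ x, ‖(Set.Ioc t T).indicator (fun _ => c) x
      - (Set.Ioc t' T).indicator (fun _ => c) x‖
      ≤ ‖(Set.Ioc (min t t') (max t t')).indicator (fun _ => c) x‖ := by
    intro x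
    by_cases h1 : x ∈ Set.Ioc t T <;> by_cases h2 : x ∈ Set.Ioc t' T
    · simp [Set.indicator_of_mem, h1, h2]
    · have hx : x ∈ Set.Ioc (min t t') (max t t') := by
        refine ⟨lt_of_le_of_lt (min_le_left _ _) h1.1, ?_⟩
        have hxt' : x ≤ t' := by
          by_contra hc
          exact h2 ⟨lt_of_not_ge hc, h1.2⟩
        exact le_trans hxt' (le_max_right _ _)
      simp [Set.indicator_of_mem, Set.indicator_of_notMem, h1, h2, hx]
    · have hx : x ∈ Set.Ioc (min t t') (max t t') := by
        refine ⟨lt_of_le_of_lt (min_le_right _ _) h2.1, ?_⟩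
        have hxt : x ≤ t := by
          by_contra hc
          exact h1 ⟨lt_of_not_ge hc, h2.2⟩
        exact le_trans hxt (le_max_left _ _)
      simp [Set.indicator_of_mem, Set.indicator_of_notMem, h1, h2, hx]
    · simp [Set.indicator_of_notMem, h1, h2]
  have hGfin : eLpNorm ((Set.Ioc (min t t') (max t t')).indicator (fun _ => c)) 1 (μT T) ≠ ⊤ := by
    rw [eLpNorm_indicator_const measurableSet_Ioc one_ne_zero ENNReal.one_ne_top]
    exact ENNReal.mul_ne_top (by simp) (by simpa using μT_fin T _)
  calc ‖ind T t c - ind T t' c‖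
      = (eLpNorm (⇑(ind T t c - ind T t' c)) 1 (μT T)).toReal := Lp.norm_def _
    _ = (eLpNorm (fun x => (Set.Ioc t T).indicator (fun _ => c) x
        - (Set.Ioc t' T).indicator (fun _ => c) x) 1 (μT T)).toReal := by
        rw [eLpNorm_congr_ae hcoe]
    _ ≤ (eLpNorm ((Set.Ioc (min t t') (max t t')).indicator (fun _ => c)) 1 (μT T)).toReal :=
        ENNReal.toReal_mono hGfin (eLpNorm_mono_ae (Filter.Eventually.of_forall hb))
    _ = |c| * (μT T (Set.Ioc (min t t') (max t t'))).toReal := by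
        rw [eLpNorm_indicator_const measurableSet_Ioc one_ne_zero ENNReal.one_ne_top]
        simp [ENNReal.toReal_mul, Real.norm_eq_abs]
    _ ≤ |c| * |t - t'| := by
        refine mul_le_mul_of_nonneg_left ?_ (abs_nonneg _)
        refine (meas_le_abs T _ _).trans ?_
        rw [max_sub_min_eq_abs']
        simp [abs_sub_comm t t', le_abs_self, abs_nonneg]
    
lemma key2 (T t c c' : ℝ) : ‖ind T t c - ind T t c'‖ ≤ |c - c'| * max T 0 := by
  rw [ind, ind, indicatorConstLp_sub, ← ind, norm_ind]
  exact mul_le_mul_of_nonneg_left (meas_le_T T _) (abs_nonneg _)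

lemma cont_ind (T : ℝ) : Continuous fun q : ℝ × ℝ => ind T q.1 q.2 := by
  rw [Metric.continuous_iff]
  rintro ⟨t₀, c₀⟩ ε hε
  set M : ℝ := |c₀| + max T 0 + 1 with hM
  have hMpos : 0 < M := by positivity
  refine ⟨min 1 (ε / (2 * M)), by positivity, ?_⟩
  rintro ⟨t, c⟩ hdist
  have hd1 : dist t t₀ < min 1 (ε / (2 * M)) :=
    lt_of_le_of_lt (by rw [Prod.dist_eq]; exact le_max_left _ _) hdist
  have hd2 : dist c c₀ < min 1 (ε / (2 * M)) :=
    lt_of_le_of_lt (by rw [Prod.dist_eq]; exact le_max_right _ _) hdist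
  set δ : ℝ := min 1 (ε / (2 * M)) with hδdef
  have hδ1 : δ ≤ 1 := min_le_left _ _
  have hδ2 : δ ≤ ε / (2 * M) := min_le_right _ _
  have hδpos : 0 < δ := by positivity
  have h1 : |t - t₀| < δ := by rwa [Real.dist_eq] at hd1
  have h2 : |c - c₀| < δ := by rwa [Real.dist_eq] at hd2
  have hcb : |c| ≤ |c₀| + 1 := by
    have := abs_sub_abs_le_abs_sub c c₀
    nlinarith [abs_nonneg (c - c₀)]
  calc dist (ind T t c) (ind T t₀ c₀)
      = ‖ind T t c - ind T t₀ c₀‖ := dist_eq_norm _ _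
    _ ≤ ‖ind T t c - ind T t₀ c‖ + ‖ind T t₀ c - ind T t₀ c₀‖ := by
        rw [show ind T t c - ind T t₀ c₀
          = (ind T t c - ind T t₀ c) + (ind T t₀ c - ind T t₀ c₀) by abel]
        exact norm_add_le _ _
    _ ≤ |c| * |t - t₀| + |c - c₀| * max T 0 := add_le_add (key1 T _ _ _) (key2 T _ _ _)
    _ ≤ (|c₀| + 1) * δ + δ * max T 0 := by
        refine add_le_add ?_ ?_
        · exact mul_le_mul hcb h1.le (abs_nonneg _) (by positivity)
        · exact mul_le_mul_of_nonneg_right h2.le (le_max_right _ _)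
    _ = δ * M := by rw [hM]; ring
    _ ≤ (ε / (2 * M)) * M := mul_le_mul_of_nonneg_right hδ2 hMpos.le
    _ < ε := by
        have hEq : (ε / (2 * M)) * M = ε / 2 := by field_simp
        rw [hEq]
        linarith

end Stmt3Aux

namespace Stmt3Aux

lemma coeFn_sum {ι : Type*} (T : ℝ) (sfin : Finset ι) (g : ι → Lp ℝ 1 (μT T)) :
    ⇑(∑ i ∈ sfin, g i) =ᵐ[μT T] fun x => ∑ i ∈ sfin, g i x := by
  classical
  induction sfin using Finset.induction_on with
  | empty => simp only [Finset.sum_empty]; exact Lp.coeFn_zero ℝ 1 (μT T)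
  | @insert a sf ha ih =>
      rw [Finset.sum_insert ha]
      filter_upwards [Lp.coeFn_add (g a) (∑ i ∈ sf, g i), ih] with x h1 h2
      rw [h1, Pi.add_apply, h2]
      rw [Finset.sum_insert ha]

end Stmt3Aux

theorem stmt_3 (w : ℝ → ℝ) (wstar : ℝ) (hbdd : ∀ t : ℝ, |w t| ≤ wstar)
    (s : ℕ → ℝ) (hs0 : s 0 = 0) (hmono : StrictMono s)
    (htop : Filter.Tendsto s Filter.atTop Filter.atTop)
    (hconst : ∀ k : ℕ, ∀ t₁ ∈ Set.Ico (s k) (s (k+1)), ∀ t₂ ∈ Set.Ico (s k) (s (k+1)),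
      w t₁ = w t₂)
    (δ₀ : ℝ) (hδ₀ : 0 < δ₀) (hdwell : ∀ k : ℕ, δ₀ ≤ s (k+1) - s k)
    (T : ℝ) (hT : 0 < T) :
    IsCompact (closure
      {f : Lp ℝ 1 (volume.restrict (Set.Ioc (0:ℝ) T)) |
        ∃ r : ℝ, 0 ≤ r ∧
          (⇑f) =ᵐ[volume.restrict (Set.Ioc (0:ℝ) T)] fun t => w (r + t)}) := by
  classical
  have hw0 : 0 ≤ wstar := le_trans (abs_nonneg _) (hbdd 0)
  obtain ⟨N, hN⟩ : ∃ N : ℕ, T ≤ (N : ℝ) * δ₀ := by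
    obtain ⟨n, hn⟩ := exists_nat_ge (T / δ₀)
    exact ⟨n, by rwa [div_le_iff₀ hδ₀] at hn⟩
  have hgap : ∀ n k : ℕ, s k + (n : ℝ) * δ₀ ≤ s (k + n) := by
    intro n
    induction n with
    | zero => intro k; simp
    | succ n ih =>
        intro k
        have h1 := hdwell (k + n)
        have h2 := ih k
        have h3 : ((n + 1 : ℕ) : ℝ) * δ₀ = (n : ℝ) * δ₀ + δ₀ := by push_cast; ring
        calc s k + ((n + 1 : ℕ) : ℝ) * δ₀ = s k + (n : ℝ) * δ₀ + δ₀ := by rw [h3]; ring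
          _ ≤ s (k + n) + δ₀ := by linarith
          _ ≤ s (k + n + 1) := by linarith
  set K : Set ((Fin N → ℝ × ℝ) × ℝ) :=
    (Set.univ.pi fun _ : Fin N => Set.Icc (0:ℝ) T ×ˢ Set.Icc (-(2*wstar)) (2*wstar)) ×ˢ
      Set.Icc (-wstar) wstar with hKdef
  have hK : IsCompact K :=
    (isCompact_univ_pi fun _ => isCompact_Icc.prod isCompact_Icc).prod isCompact_Icc
  set Φ : ((Fin N → ℝ × ℝ) × ℝ) → Lp ℝ 1 (volume.restrict (Set.Ioc (0:ℝ) T)) :=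
    fun p => Stmt3Aux.ind T (-1) p.2 + ∑ i : Fin N, Stmt3Aux.ind T (p.1 i).1 (p.1 i).2
    with hΦdef
  have hΦc : Continuous Φ := by
    rw [hΦdef]
    apply Continuous.add
    · exact (Stmt3Aux.cont_ind T).comp (continuous_const.prodMk continuous_snd)
    · exact continuous_finset_sum _ fun i _ =>
        (Stmt3Aux.cont_ind T).comp ((continuous_apply i).comp continuous_fst)
  have hsub : {f : Lp ℝ 1 (volume.restrict (Set.Ioc (0:ℝ) T)) |
      ∃ r : ℝ, 0 ≤ r ∧
        (⇑f) =ᵐ[volume.restrict (Set.Ioc (0:ℝ) T)] fun t => w (r + t)} ⊆ Φ '' K := by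
    rintro f ⟨r, hr, hf⟩
    have hex : ∃ k, r < s k := (htop.eventually_gt_atTop r).exists
    set k₀ := Nat.find hex with hk₀def
    have hk₀ : r < s k₀ := Nat.find_spec hex
    have hk₀min : ∀ m, m < k₀ → s m ≤ r := fun m hm => le_of_not_gt (Nat.find_min hex hm)
    have hk₀pos : k₀ ≠ 0 := by
      intro h
      rw [h, hs0] at hk₀
      exact absurd hk₀ (not_lt.mpr hr)
    set W : ℕ → ℝ := fun m => Nat.casesOn m (w r) (fun m' => w (s (k₀ + m'))) with hWdef
    have hW0 : W 0 = w r := by simp [hWdef]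
    have hWsucc : ∀ m, W (m + 1) = w (s (k₀ + m)) := fun m => by simp [hWdef]
    have hWbd : ∀ m, |W m| ≤ wstar := by
      intro m
      cases m with
      | zero => rw [hW0]; exact hbdd r
      | succ m' => rw [hWsucc]; exact hbdd _
    refine ⟨((fun i : Fin N => (min (s (k₀ + (i:ℕ)) - r) T, W ((i:ℕ)+1) - W (i:ℕ))), w r),
      ?_, ?_⟩
    · -- membership in K
      rw [hKdef]
      refine Set.mem_prod.mpr ⟨?_, ?_⟩
      · rw [Set.mem_pi]
        intro i _
        refine Set.mem_prod.mpr ⟨?_, ?_⟩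
        · rw [Set.mem_Icc]
          refine ⟨le_min ?_ hT.le, min_le_right _ _⟩
          have h5 : r < s (k₀ + (i:ℕ)) :=
            lt_of_lt_of_le hk₀ (hmono.monotone (Nat.le_add_right _ _))
          linarith
        · rw [Set.mem_Icc]
          have h6 := abs_le.mp (hWbd ((i:ℕ)+1))
          have h7 := abs_le.mp (hWbd (i:ℕ))
          constructor <;> simp only [] <;> linarith [h6.1, h6.2, h7.1, h7.2]
      · exact Set.mem_Icc.mpr (abs_le.mp (hbdd r))
    · -- Φ p = f
      have hΦeq : Φ ((fun i : Fin N =>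
            (min (s (k₀ + (i:ℕ)) - r) T, W ((i:ℕ)+1) - W (i:ℕ))), w r)
          = Stmt3Aux.ind T (-1) (w r)
            + ∑ i : Fin N,
                Stmt3Aux.ind T (min (s (k₀ + (i:ℕ)) - r) T) (W ((i:ℕ)+1) - W (i:ℕ)) := by
        rw [hΦdef]
      rw [hΦeq]
      have hcoe : ⇑(Stmt3Aux.ind T (-1) (w r)
            + ∑ i : Fin N,
                Stmt3Aux.ind T (min (s (k₀ + (i:ℕ)) - r) T) (W ((i:ℕ)+1) - W (i:ℕ)))
          =ᵐ[volume.restrict (Set.Ioc (0:ℝ) T)]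
          fun x => (Set.Ioc (-1:ℝ) T).indicator (fun _ => w r) x
            + ∑ i : Fin N, (Set.Ioc (min (s (k₀ + (i:ℕ)) - r) T) T).indicator
                (fun _ => W ((i:ℕ)+1) - W (i:ℕ)) x := by
        have hall : ∀ᵐ x ∂(volume.restrict (Set.Ioc (0:ℝ) T)), ∀ i : Fin N,
            (Stmt3Aux.ind T (min (s (k₀ + (i:ℕ)) - r) T) (W ((i:ℕ)+1) - W (i:ℕ))) x
              = (Set.Ioc (min (s (k₀ + (i:ℕ)) - r) T) T).indicator
                  (fun _ => W ((i:ℕ)+1) - W (i:ℕ)) x :=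
          ae_all_iff.mpr fun i => Stmt3Aux.ind_coe T _ _
        filter_upwards [Lp.coeFn_add (Stmt3Aux.ind T (-1) (w r))
            (∑ i : Fin N,
              Stmt3Aux.ind T (min (s (k₀ + (i:ℕ)) - r) T) (W ((i:ℕ)+1) - W (i:ℕ))),
          Stmt3Aux.coeFn_sum T Finset.univ
            (fun i : Fin N =>
              Stmt3Aux.ind T (min (s (k₀ + (i:ℕ)) - r) T) (W ((i:ℕ)+1) - W (i:ℕ))),
          Stmt3Aux.ind_coe T (-1) (w r), hall] with x h1 h2 h3 h4
        rw [h1, Pi.add_apply, h2, h3]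
        exact congrArg _ (Finset.sum_congr rfl fun i _ => h4 i)
      have hnull : (volume.restrict (Set.Ioc (0:ℝ) T)) (⋃ k : ℕ, {s k - r}) = 0 := by
        refine measure_iUnion_null fun k => ?_
        rw [Measure.restrict_apply (measurableSet_singleton _)]
        exact measure_mono_null Set.inter_subset_left Real.volume_singleton
      have hcompl : ∀ᵐ x ∂(volume.restrict (Set.Ioc (0:ℝ) T)),
          x ∉ ⋃ k : ℕ, ({s k - r} : Set ℝ) := measure_eq_zero_iff_ae_notMem.mp hnull
      have hmain : (fun x => (Set.Ioc (-1:ℝ) T).indicator (fun _ => w r) x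
            + ∑ i : Fin N, (Set.Ioc (min (s (k₀ + (i:ℕ)) - r) T) T).indicator
                (fun _ => W ((i:ℕ)+1) - W (i:ℕ)) x)
          =ᵐ[volume.restrict (Set.Ioc (0:ℝ) T)] fun x => w (r + x) := by
        filter_upwards [ae_restrict_mem measurableSet_Ioc, hcompl] with x hx hxE
        obtain ⟨hx0, hxT⟩ := hx
        have hxne : ∀ k : ℕ, r + x ≠ s k := by
          intro k hk
          exact hxE (Set.mem_iUnion.mpr ⟨k, by rw [Set.mem_singleton_iff]; linarith⟩)
        rw [Set.indicator_of_mem (by constructor <;> linarith : x ∈ Set.Ioc (-1:ℝ) T)]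
        have hjex : ∃ m, r + x ≤ s (k₀ + m) := by
          obtain ⟨K', hK'⟩ := (htop.eventually_ge_atTop (r + x)).exists
          exact ⟨K', le_trans hK' (hmono.monotone (Nat.le_add_left _ _))⟩
        set j := Nat.find hjex with hjdef
        have hj : r + x ≤ s (k₀ + j) := Nat.find_spec hjex
        have hjmin : ∀ m, m < j → s (k₀ + m) < r + x :=
          fun m hm => not_le.mp (Nat.find_min hjex hm)
        have hjN : j ≤ N := by
          apply Nat.find_le
          have h1 := hgap N k₀
          linarith
        have hcond : ∀ i : Fin N,
            (Set.Ioc (min (s (k₀ + (i:ℕ)) - r) T) T).indicator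
              (fun _ => W ((i:ℕ)+1) - W (i:ℕ)) x
            = if (i:ℕ) < j then W ((i:ℕ)+1) - W (i:ℕ) else 0 := by
          intro i
          by_cases hij : (i:ℕ) < j
          · rw [if_pos hij, Set.indicator_of_mem]
            have h8 := hjmin _ hij
            refine ⟨?_, hxT⟩
            calc min (s (k₀ + (i:ℕ)) - r) T ≤ s (k₀ + (i:ℕ)) - r := min_le_left _ _
              _ < x := by linarith
          · rw [if_neg hij, Set.indicator_of_notMem]
            intro hmem
            have h2 : s (k₀ + (i:ℕ)) - r < x := by
              rcases min_lt_iff.mp hmem.1 with h | h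
              · exact h
              · linarith
            have h3 : s (k₀ + j) ≤ s (k₀ + (i:ℕ)) :=
              hmono.monotone (Nat.add_le_add_left (not_lt.mp hij) _)
            linarith
        rw [Finset.sum_congr rfl fun i _ => hcond i]
        have hsumeq : (∑ i : Fin N, if (i:ℕ) < j then W ((i:ℕ)+1) - W (i:ℕ) else 0)
            = W j - W 0 := by
          rw [Fin.sum_univ_eq_sum_range (fun i => if i < j then W (i+1) - W i else 0) N]
          rw [← Finset.sum_filter]
          have hfs : (Finset.range N).filter (fun i => i < j) = Finset.range j := by
            ext i
            simp only [Finset.mem_filter, Finset.mem_range]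
            omega
          rw [hfs, Finset.sum_range_sub (fun i => W i)]
        rw [hsumeq, hW0]
        have hWj : W j = w (r + x) := by
          rcases Nat.eq_zero_or_pos j with hj0 | hjpos
          · obtain ⟨m, hm⟩ := Nat.exists_eq_succ_of_ne_zero hk₀pos
            have hm' : k₀ = m + 1 := by omega
            have hsm : s m ≤ r := hk₀min m (by omega)
            have hj' : r + x ≤ s k₀ := by
              have := hj
              rw [hj0] at this
              simpa using this
            have hlt : r + x < s k₀ := lt_of_le_of_ne hj' (hxne k₀)
            rw [hj0, hW0]
            refine (hconst m (r + x) ⟨by linarith, by rw [← hm']; exact hlt⟩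
              r ⟨hsm, by rw [← hm']; exact hk₀⟩).symm
          · obtain ⟨m, hm⟩ := Nat.exists_eq_succ_of_ne_zero hjpos.ne'
            have hlow : s (k₀ + m) < r + x := hjmin m (by omega)
            have hup : r + x < s (k₀ + m + 1) := by
              refine lt_of_le_of_ne ?_ (hxne _)
              have := hj
              rw [hm] at this
              exact this
            rw [hm, hWsucc]
            exact (hconst (k₀ + m) (r + x) ⟨hlow.le, hup⟩ (s (k₀ + m))
              ⟨le_refl _, hmono (Nat.lt_succ_self _)⟩).symm
        linarith
      exact MeasureTheory.Lp.ext (hcoe.trans (hmain.trans hf.symm))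
  exact (hK.image hΦc).of_isClosed_subset isClosed_closure
    (closure_minimal hsub (hK.image hΦc).isClosed)
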